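/- Define continuous functions on [0,1] by p(t) = s(t) = x(t) = y(t) = 1, q(t) = 1 + t, r(t) = 1 + 2t, v(t) = 1 − 0.9t, a(t) = b(t) = c(t) = √(3t), u(t) = (6 + 14.7t²)/(6(1+t)), z(t) = (6 + 12.3t²)/(6(1+2t)(1−0.9t)), and K(t) = 6 − 18t + 2.7t² + 6t√(3t)). Then for every t ∈ [0,1]: (i) 6p(t)s(t)x(t) − b(t)²(2s(t)+v(t)) − a(t)²(2x(t)+y(t)) + 2a(t)b(t)c(t) = K(t); (ii) 6q(t)u(t)y(t) − c(t)²(2q(t)+r(t)) − a(t)²(x(t)+2y(t)) + 2a(t)b(t)c(t) = K(t); (iii) 6r(t)v(t)z(t) − c(t)²(q(t)+2r(t)) − b(t)²(s(t)+2v(t)) + 2a(t)b(t)c(t) = K(t); (iv) all of p,q,r,s,u,v,x,y,z are strictly positive on [0,1] and K(t) > 0 on [0,1]; (v) at t = 0 one has q = r = u = v = 1 and a = b = c = 0; and (vi) 3p(1)x(1) − b(1)² = 0 while 3p(0)x(0) − b(0)² = 3 > 0. -/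

import Mathlib

namespace VbMAPath

noncomputable section

def p (_t : ℝ) : ℝ := 1
def s (_t : ℝ) : ℝ := 1
def x (_t : ℝ) : ℝ := 1
def y (_t : ℝ) : ℝ := 1
def q (t : ℝ) : ℝ := 1 + t
def r (t : ℝ) : ℝ := 1 + 2 * t
def v (t : ℝ) : ℝ := 1 - 0.9 * t
def a (t : ℝ) : ℝ := Real.sqrt (3 * t)
def b (t : ℝ) : ℝ := Real.sqrt (3 * t)
def c (t : ℝ) : ℝ := Real.sqrt (3 * t)
def u (t : ℝ) : ℝ := (6 + 14.7 * t ^ 2) / (6 * (1 + t))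
def z (t : ℝ) : ℝ := (6 + 12.3 * t ^ 2) / (6 * (1 + 2 * t) * (1 - 0.9 * t))
def K (t : ℝ) : ℝ := 6 - 18 * t + 2.7 * t ^ 2 + 6 * t * Real.sqrt (3 * t)

theorem stmt4 :
    (∀ t ∈ Set.Icc (0 : ℝ) 1,
      6 * p t * s t * x t - b t ^ 2 * (2 * s t + v t) - a t ^ 2 * (2 * x t + y t)
        + 2 * a t * b t * c t = K t) ∧
    (∀ t ∈ Set.Icc (0 : ℝ) 1,
      6 * q t * u t * y t - c t ^ 2 * (2 * q t + r t) - a t ^ 2 * (x t + 2 * y t)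
        + 2 * a t * b t * c t = K t) ∧
    (∀ t ∈ Set.Icc (0 : ℝ) 1,
      6 * r t * v t * z t - c t ^ 2 * (q t + 2 * r t) - b t ^ 2 * (s t + 2 * v t)
        + 2 * a t * b t * c t = K t) ∧
    (∀ t ∈ Set.Icc (0 : ℝ) 1,
      0 < p t ∧ 0 < q t ∧ 0 < r t ∧ 0 < s t ∧ 0 < u t ∧ 0 < v t ∧
      0 < x t ∧ 0 < y t ∧ 0 < z t ∧ 0 < K t) ∧
    (q 0 = 1 ∧ r 0 = 1 ∧ u 0 = 1 ∧ v 0 = 1 ∧ a 0 = 0 ∧ b 0 = 0 ∧ c 0 = 0) ∧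
    (3 * p 1 * x 1 - b 1 ^ 2 = 0) ∧
    (3 * p 0 * x 0 - b 0 ^ 2 = 3 ∧ (0 : ℝ) < 3) := by
  have hsq : ∀ t : ℝ, t ∈ Set.Icc (0:ℝ) 1 → Real.sqrt (3 * t) ^ 2 = 3 * t := by
    intro t ht
    exact Real.sq_sqrt (by linarith [ht.1])
  refine ⟨?_, ?_, ?_, ?_, ?_, ?_, ?_⟩
  · intro t ht
    have h := hsq t ht
    simp only [p, s, x, y, v, a, b, c, K]
    nlinarith [h, Real.sqrt_nonneg (3 * t)]
  · intro t ht
    have h := hsq t ht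
    have h1 : (6 : ℝ) * (1 + t) ≠ 0 := by nlinarith [ht.1]
    simp only [q, u, y, x, a, b, c, r, K]
    set w := Real.sqrt (3 * t) with hw
    rw [mul_div_assoc', mul_div_cancel_left₀ _ h1]
    linear_combination (2 * w - 6 - 4 * t) * h
  · intro t ht
    have h := hsq t ht
    have h1 : (6 : ℝ) * (1 + 2 * t) * (1 - 0.9 * t) ≠ 0 := by
      have : (0.9 : ℝ) * t ≤ 0.9 := by nlinarith [ht.2]
      nlinarith [ht.1]
    simp only [q, v, s, z, a, b, c, r, K]
    set w := Real.sqrt (3 * t) with hw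
    rw [mul_div_assoc', mul_div_cancel_left₀ _ h1]
    linear_combination (2 * w - 6 - 3.2 * t) * h
  · intro t ht
    obtain ⟨ht0, ht1⟩ := ht
    have hv : (0:ℝ) < 1 - 0.9 * t := by nlinarith
    have h := hsq t ⟨ht0, ht1⟩
    have hs0 := Real.sqrt_nonneg (3 * t)
    refine ⟨one_pos, by simp only [q]; linarith, by simp only [r]; linarith,
      one_pos, ?_, hv, one_pos, one_pos, ?_, ?_⟩
    · simp only [u]
      positivity
    · simp only [z]
      apply div_pos
      · positivity
      · positivity
    · simp only [K]
      set w := Real.sqrt (3 * t) with hw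
      have hw3 : w ^ 2 ≤ 3 := by rw [h]; linarith
      nlinarith [sq_nonneg (w - 1.5), sq_nonneg (w^2 - 2), sq_nonneg (w - 1),
        sq_nonneg (w^2 + w - 3), mul_nonneg hs0 (sq_nonneg (w - 1.5)),
        mul_nonneg hs0 hs0]
  · refine ⟨by simp [q], by simp [r], by norm_num [u], by norm_num [v],
      by simp [a], by simp [b], by simp [c]⟩
  · simp only [p, x, b]
    rw [Real.sq_sqrt (by norm_num : (3:ℝ) * 1 ≥ 0)]
    norm_num
  · refine ⟨?_, by norm_num⟩
    simp [p, x, b]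

end

end VbMAPath
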